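/- arXiv:0912.5478 — 3 statements merged into one kernel-verified Lean document; each statement's English description precedes it below -/
import Mathlib

section
/- Let B₀ ⊆ B₁ be building sets on [n+1] and S ∈ B₁. Then there exists a unique partition S = S₁ ⊔ ... ⊔ S_k with each S_j ∈ B₀ and k minimal among all such disjoint representations (the decomposition of S by elements of B₀). -/
/-- A building set on a subset `X` of `[n+1]` (modeled as `Fin (n+1)`). -/
def IsBuildingSetOn {n : ℕ} (X : Finset (Fin (n + 1))) (B : Set (Finset (Fin (n + 1)))) : Prop :=
  (∀ S ∈ B, S.Nonempty ∧ S ⊆ X) ∧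
  (∀ i ∈ X, ({i} : Finset (Fin (n + 1))) ∈ B) ∧
  (∀ S₁ ∈ B, ∀ S₂ ∈ B, (S₁ ∩ S₂).Nonempty → S₁ ∪ S₂ ∈ B)

/-- `D` is a partition of `S` into pairwise disjoint nonempty members of `B₀`. -/
def IsBSPartition {n : ℕ} (B₀ : Set (Finset (Fin (n + 1)))) (S : Finset (Fin (n + 1)))
    (D : Finset (Finset (Fin (n + 1)))) : Prop :=
  (∀ T ∈ D, T ∈ B₀) ∧ (∀ T ∈ D, T.Nonempty) ∧
  (D : Set (Finset (Fin (n + 1)))).Pairwise (fun T T' => Disjoint T T') ∧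
  D.sup id = S

/-- `D` is the decomposition of `S` by elements of `B₀`: a partition of `S` into members of
`B₀` with the minimal number of parts. -/
def IsDecomposition {n : ℕ} (B₀ : Set (Finset (Fin (n + 1)))) (S : Finset (Fin (n + 1)))
    (D : Finset (Finset (Fin (n + 1)))) : Prop :=
  IsBSPartition B₀ S D ∧ ∀ D', IsBSPartition B₀ S D' → D.card ≤ D'.card

/-- Given building sets `B₀ ⊆ B₁` on `[n+1]` and `S ∈ B₁`, there is a unique partition of `S`
into pairwise disjoint members of `B₀` with minimal number of parts. -/
theorem stmt4 {n : ℕ} (B₀ B₁ : Set (Finset (Fin (n + 1))))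
    (hB₀ : IsBuildingSetOn Finset.univ B₀) (hB₁ : IsBuildingSetOn Finset.univ B₁)
    (hsub : B₀ ⊆ B₁) (S : Finset (Fin (n + 1))) (hS : S ∈ B₁) :
    ∃! D : Finset (Finset (Fin (n + 1))), IsDecomposition B₀ S D := by
  classical
  obtain ⟨hB₀mem, hB₀sing, hB₀union⟩ := hB₀
  -- the family of members of B₀ contained in S
  set 𝒜 : Finset (Finset (Fin (n + 1))) :=
    S.powerset.filter (fun T => T ∈ B₀) with h𝒜
  have hA_iff : ∀ T, T ∈ 𝒜 ↔ T ⊆ S ∧ T ∈ B₀ := by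
    intro T; simp [h𝒜, Finset.mem_powerset]
  -- the set of maximal members
  set Dst : Finset (Finset (Fin (n + 1))) :=
    𝒜.filter (fun T => ∀ T' ∈ 𝒜, T ⊆ T' → T = T') with hDst
  have hDst_iff : ∀ M, M ∈ Dst ↔ M ∈ 𝒜 ∧ ∀ T' ∈ 𝒜, M ⊆ T' → M = T' := by
    intro M; simp [hDst]
  -- every member of 𝒜 is contained in a maximal one
  have hmax : ∀ T ∈ 𝒜, ∃ M ∈ Dst, T ⊆ M := by
    intro T hT
    obtain ⟨M, hM, hMmax⟩ := (𝒜.filter (fun U => T ⊆ U)).exists_maximal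
      ⟨T, by simp [Finset.mem_filter, hT]⟩
    rw [Finset.mem_filter] at hM
    refine ⟨M, (hDst_iff M).2 ⟨hM.1, ?_⟩, hM.2⟩
    intro T' hT' hMT'
    by_contra hne
    exact hne (le_antisymm hMT' (hMmax (Finset.mem_filter.2 ⟨hT', hM.2.trans hMT'⟩)
      hMT'))
  -- maximal members are pairwise disjoint
  have hdisj : ∀ M ∈ Dst, ∀ M' ∈ Dst, M ≠ M' → Disjoint M M' := by
    intro M hM M' hM' hne
    rw [hDst_iff] at hM hM'
    by_contra hnd
    rw [Finset.disjoint_left] at hnd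
    push_neg at hnd
    obtain ⟨x, hxM, hxM'⟩ := hnd
    have hint : (M ∩ M').Nonempty := ⟨x, Finset.mem_inter.2 ⟨hxM, hxM'⟩⟩
    have hUmem : M ∪ M' ∈ B₀ :=
      hB₀union M ((hA_iff M).1 hM.1).2 M' ((hA_iff M').1 hM'.1).2 hint
    have hUA : M ∪ M' ∈ 𝒜 := (hA_iff _).2
      ⟨Finset.union_subset ((hA_iff M).1 hM.1).1 ((hA_iff M').1 hM'.1).1, hUmem⟩
    have h1 : M = M ∪ M' := hM.2 _ hUA Finset.subset_union_left
    have h2 : M' = M ∪ M' := hM'.2 _ hUA Finset.subset_union_right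
    exact hne (h1.trans h2.symm)
  -- Dst is a partition of S
  have hDstPart : IsBSPartition B₀ S Dst := by
    refine ⟨fun T hT => ((hA_iff T).1 ((hDst_iff T).1 hT).1).2,
      fun T hT => (hB₀mem T ((hA_iff T).1 ((hDst_iff T).1 hT).1).2).1,
      fun T hT T' hT' hne => hdisj T hT T' hT' hne, ?_⟩
    apply Finset.Subset.antisymm
    · exact Finset.sup_le fun M hM => ((hA_iff M).1 ((hDst_iff M).1 hM).1).1
    · intro i hi
      have hsing : ({i} : Finset (Fin (n + 1))) ∈ 𝒜 :=
        (hA_iff _).2 ⟨Finset.singleton_subset_iff.2 hi, hB₀sing i (Finset.mem_univ i)⟩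
      obtain ⟨M, hM, hiM⟩ := hmax _ hsing
      exact Finset.mem_sup.2 ⟨M, hM, hiM (Finset.mem_singleton_self i)⟩
  -- the map sending a part to the maximal member containing it
  set f : Finset (Fin (n + 1)) → Finset (Fin (n + 1)) :=
    fun T => if h : ∃ M ∈ Dst, T ⊆ M then h.choose else ∅ with hf
  have hf_spec : ∀ T ∈ 𝒜, f T ∈ Dst ∧ T ⊆ f T := by
    intro T hT
    have h : ∃ M ∈ Dst, T ⊆ M := hmax T hT
    simp only [hf, dif_pos h]
    exact ⟨h.choose_spec.1, h.choose_spec.2⟩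
  -- key counting lemma
  have hkey : ∀ D, IsBSPartition B₀ S D →
      Dst.card ≤ D.card ∧ (D.card ≤ Dst.card → D = Dst) := by
    intro D hD
    obtain ⟨hDB, hDne, hDdisj, hDsup⟩ := hD
    have hDA : ∀ T ∈ D, T ∈ 𝒜 := by
      intro T hT
      exact (hA_iff T).2 ⟨hDsup ▸ Finset.le_sup (f := id) hT, hDB T hT⟩
    -- f is surjective from D onto Dst
    have hsurj : Set.SurjOn f ↑D ↑Dst := by
      intro M hM
      have hMne : M.Nonempty :=
        (hB₀mem M ((hA_iff M).1 ((hDst_iff M).1 hM).1).2).1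
      obtain ⟨x, hx⟩ := hMne
      have hxS : x ∈ S := ((hA_iff M).1 ((hDst_iff M).1 hM).1).1 hx
      rw [← hDsup] at hxS
      obtain ⟨T, hT, hxT⟩ := Finset.mem_sup.1 hxS
      obtain ⟨hfTD, hTfT⟩ := hf_spec T (hDA T hT)
      have : f T = M := by
        by_contra hne
        exact (hdisj (f T) hfTD M hM hne).forall_ne_finset (hTfT hxT) hx rfl
      exact ⟨T, hT, this⟩
    have hcard : Dst.card ≤ D.card := Finset.card_le_card_of_surjOn f hsurj
    refine ⟨hcard, fun hle => ?_⟩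
    have hcardeq : D.card = Dst.card := le_antisymm hle hcard
    -- f restricted to D is injective
    have himg : D.image f = Dst := by
      apply Finset.Subset.antisymm
      · intro M hM
        obtain ⟨T, hT, rfl⟩ := Finset.mem_image.1 hM
        exact (hf_spec T (hDA T hT)).1
      · intro M hM
        obtain ⟨T, hT, hfT⟩ := hsurj hM
        exact Finset.mem_image.2 ⟨T, hT, hfT⟩
    have hinj : Set.InjOn f ↑D := by
      apply Finset.injOn_of_card_image_eq
      rw [himg, hcardeq]
    -- every maximal member is a part of D
    have hsubset : Dst ⊆ D := by
      intro M hM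
      obtain ⟨T, hT, hfT⟩ := hsurj hM
      have hTM : T ⊆ M := hfT ▸ (hf_spec T (hDA T hT)).2
      have hMT : M ⊆ T := by
        intro x hx
        have hxS : x ∈ S := ((hA_iff M).1 ((hDst_iff M).1 hM).1).1 hx
        rw [← hDsup] at hxS
        obtain ⟨T', hT', hxT'⟩ := Finset.mem_sup.1 hxS
        obtain ⟨hfT'D, hT'fT'⟩ := hf_spec T' (hDA T' hT')
        have hfT'M : f T' = M := by
          by_contra hne
          exact (hdisj (f T') hfT'D M hM hne).forall_ne_finset (hT'fT' hxT') hx rfl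
        have : T' = T := hinj hT' hT (by rw [hfT'M, hfT])
        exact this ▸ hxT'
      have : M = T := Finset.Subset.antisymm hMT hTM
      exact this ▸ hT
    exact (Finset.eq_of_subset_of_card_le hsubset hle).symm
  -- conclusion
  refine ⟨Dst, ⟨hDstPart, fun D' hD' => (hkey D' hD').1⟩, ?_⟩
  intro D ⟨hDpart, hDmin⟩
  exact (hkey D hDpart).2 (hDmin Dst hDstPart)
end

section
/- Let B₀ ⊆ B₁ ⊆ B₂ be building sets on [n+1] and S ∈ B₂. Then the decomposition of S by elements of B₀ equals the union over all parts T of the decomposition of S by elements of B₁ of the decomposition of T by elements of B₀ (i.e., B₀(S) = B₀(B₁(S))). -/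
def Absorbing {n : ℕ} (B : Set (Finset (Fin (n + 1)))) (S : Finset (Fin (n + 1)))
    (D : Finset (Finset (Fin (n + 1)))) : Prop :=
  ∀ T ∈ D, ∀ b ∈ B, b ⊆ S → (b ∩ T).Nonempty → b ⊆ T

lemma sup_union_mem {n : ℕ} {X : Finset (Fin (n+1))} {B : Set (Finset (Fin (n + 1)))}
    (hB : IsBuildingSetOn X B) {U : Finset (Fin (n+1))} (hU : U ∈ B)
    (E : Finset (Finset (Fin (n+1)))) (hE : ∀ T ∈ E, T ∈ B ∧ (T ∩ U).Nonempty) :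
    U ∪ E.sup id ∈ B := by
  classical
  induction E using Finset.induction_on with
  | empty => simpa using hU
  | @insert a E ha ih =>
    have h1 : U ∪ E.sup id ∈ B := ih (fun T hT => hE T (Finset.mem_insert_of_mem hT))
    have h2 : a ∈ B := (hE a (Finset.mem_insert_self _ _)).1
    have h3 : ((U ∪ E.sup id) ∩ a).Nonempty := by
      obtain ⟨x, hx⟩ := (hE a (Finset.mem_insert_self _ _)).2
      simp only [Finset.mem_inter] at hx
      exact ⟨x, by simp [hx.1, hx.2]⟩
    have h4 := hB.2.2 _ h1 _ h2 h3
    have heq : (U ∪ E.sup id) ∪ a = U ∪ (insert a E).sup id := by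
      rw [Finset.sup_insert]
      simp only [id]
      ac_rfl
    rwa [heq] at h4

lemma decomposition_absorbing {n : ℕ} {B : Set (Finset (Fin (n + 1)))}
    (hB : IsBuildingSetOn Finset.univ B) {S : Finset (Fin (n+1))}
    {D : Finset (Finset (Fin (n+1)))} (hD : IsDecomposition B S D) :
    Absorbing B S D := by
  classical
  obtain ⟨⟨hmem, hne, hdisj, hsup⟩, hmin⟩ := hD
  intro T hT b hb hbS hbT
  by_contra hns
  obtain ⟨x, hxb, hxT⟩ := Finset.not_subset.mp hns
  -- U = b ∪ T ∈ B
  have hTB : T ∈ B := hmem T hT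
  have hU : b ∪ T ∈ B := hB.2.2 _ hb _ hTB hbT
  set U := b ∪ T with hUdef
  set E := D.filter (fun T' => (T' ∩ U).Nonempty) with hEdef
  have hEsub : E ⊆ D := Finset.filter_subset _ _
  have hTE : T ∈ E := by
    refine Finset.mem_filter.mpr ⟨hT, ?_⟩
    obtain ⟨y, hy⟩ := hbT
    simp only [Finset.mem_inter] at hy
    exact ⟨y, Finset.mem_inter.mpr ⟨hy.2, Finset.mem_union_right _ hy.2⟩⟩
  -- x lies in some part T'' ≠ T, which is in E
  have hxS : x ∈ S := hbS hxb
  have hxsup : x ∈ D.sup id := hsup ▸ hxS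
  obtain ⟨T'', hT''D, hxT''⟩ := Finset.mem_sup.mp hxsup
  have hT''E : T'' ∈ E := by
    refine Finset.mem_filter.mpr ⟨hT''D, ⟨x, Finset.mem_inter.mpr ⟨hxT'', ?_⟩⟩⟩
    exact Finset.mem_union_left _ hxb
  have hTne : T'' ≠ T := fun h => hxT (h ▸ hxT'')
  have hE2 : 2 ≤ E.card := Finset.one_lt_card.mpr ⟨T'', hT''E, T, hTE, hTne⟩
  -- W = U ∪ sup E ∈ B
  have hW : U ∪ E.sup id ∈ B := by
    refine sup_union_mem hB hU E (fun T' hT' => ⟨hmem T' (hEsub hT'), ?_⟩)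
    exact (Finset.mem_filter.mp hT').2
  set W := U ∪ E.sup id with hWdef
  have hTS : T ⊆ S := hsup ▸ Finset.le_sup (f := id) hT
  have hWS : W ⊆ S := Finset.union_subset (Finset.union_subset hbS hTS)
    (Finset.sup_le (fun T' hT' => hsup ▸ Finset.le_sup (f := id) (hEsub hT')))
  -- the new partition
  have hpart : IsBSPartition B S (insert W (D \ E)) := by
    refine ⟨?_, ?_, ?_, ?_⟩
    · intro T' hT'
      rcases Finset.mem_insert.mp hT' with h | h
      · exact h ▸ hW
      · exact hmem T' (Finset.mem_sdiff.mp h).1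
    · intro T' hT'
      rcases Finset.mem_insert.mp hT' with h | h
      · subst h; exact (hB.1 _ hW).1
      · exact hne T' (Finset.mem_sdiff.mp h).1
    · intro a ha b' hb' hab
      simp only [Finset.coe_insert, Set.mem_insert_iff, Finset.mem_coe] at ha hb'
      have key : ∀ c ∈ D \ E, Disjoint c W := by
        intro c hc
        obtain ⟨hcD, hcE⟩ := Finset.mem_sdiff.mp hc
        have hcU : Disjoint c U := by
          rw [Finset.disjoint_iff_inter_eq_empty, ← Finset.not_nonempty_iff_eq_empty]
          intro hcon
          exact hcE (Finset.mem_filter.mpr ⟨hcD, hcon⟩)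
        have hcsup : Disjoint c (E.sup id) := by
          rw [Finset.disjoint_sup_right]
          intro T' hT'
          have hT'D := hEsub hT'
          have : c ≠ T' := by
            rintro rfl; exact hcE hT'
          exact hdisj hcD hT'D this
        exact Finset.disjoint_union_right.mpr ⟨hcU, hcsup⟩
      rcases ha with rfl | ha <;> rcases hb' with rfl | hb'
      · exact absurd rfl hab
      · exact (key _ hb').symm
      · exact key _ ha
      · exact hdisj (Finset.mem_sdiff.mp ha).1 (Finset.mem_sdiff.mp hb').1 hab
    · rw [Finset.sup_insert]
      apply le_antisymm
      · apply _root_.sup_le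
        · exact hWS
        · apply Finset.sup_le (fun T' hT' => ?_)
          exact hsup ▸ Finset.le_sup (Finset.mem_sdiff.mp hT').1
      · rw [← hsup]
        apply Finset.sup_le
        intro T' hT'
        by_cases hT'E : T' ∈ E
        · calc (id T' : Finset (Fin (n+1))) ≤ E.sup id := Finset.le_sup hT'E
            _ ≤ W := Finset.subset_union_right
            _ ≤ _ := le_sup_left
        · exact le_trans (Finset.le_sup (f := id) (Finset.mem_sdiff.mpr ⟨hT', hT'E⟩)) le_sup_right
  have hcard := hmin _ hpart
  have h1 : (insert W (D \ E)).card ≤ (D \ E).card + 1 := Finset.card_insert_le _ _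
  have h2 : (D \ E).card = D.card - E.card := Finset.card_sdiff_of_subset hEsub
  have h3 : E.card ≤ D.card := Finset.card_le_card hEsub
  omega

lemma absorbing_subset {n : ℕ} {B : Set (Finset (Fin (n + 1)))} {S : Finset (Fin (n+1))}
    {D D' : Finset (Finset (Fin (n+1)))}
    (hD : IsBSPartition B S D) (hD' : IsBSPartition B S D')
    (haD : Absorbing B S D) (haD' : Absorbing B S D') : D ⊆ D' := by
  intro T hT
  obtain ⟨hmem, hne, hdisj, hsup⟩ := hD
  obtain ⟨hmem', hne', hdisj', hsup'⟩ := hD'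
  obtain ⟨x, hxT⟩ := hne T hT
  have hTS : T ⊆ S := hsup ▸ Finset.le_sup (f := id) hT
  have hxS : x ∈ S := hTS hxT
  obtain ⟨T', hT'D', hxT'⟩ := Finset.mem_sup.mp (hsup' ▸ hxS : x ∈ D'.sup id)
  have h1 : T ⊆ T' := haD' T' hT'D' T (hmem T hT) hTS
    ⟨x, Finset.mem_inter.mpr ⟨hxT, hxT'⟩⟩
  have h2 : T' ⊆ T := haD T hT T' (hmem' T' hT'D')
    (hsup' ▸ Finset.le_sup (f := id) hT'D')
    ⟨x, Finset.mem_inter.mpr ⟨hxT', hxT⟩⟩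
  rwa [Finset.Subset.antisymm h1 h2]

/-- For building sets `B₀ ⊆ B₁ ⊆ B₂` and `S ∈ B₂`, the decomposition of `S` by elements of
`B₀` is obtained by decomposing each part of the decomposition of `S` by elements of `B₁`
by elements of `B₀`: `B₀(S) = B₀(B₁(S))`. -/
theorem stmt6 {n : ℕ} (B₀ B₁ B₂ : Set (Finset (Fin (n + 1))))
    (hB₀ : IsBuildingSetOn Finset.univ B₀) (hB₁ : IsBuildingSetOn Finset.univ B₁)
    (hB₂ : IsBuildingSetOn Finset.univ B₂)
    (h01 : B₀ ⊆ B₁) (h12 : B₁ ⊆ B₂)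
    (S : Finset (Fin (n + 1))) (hS : S ∈ B₂)
    (D₁ : Finset (Finset (Fin (n + 1)))) (hD₁ : IsDecomposition B₁ S D₁)
    (f : Finset (Fin (n + 1)) → Finset (Finset (Fin (n + 1))))
    (hf : ∀ T ∈ D₁, IsDecomposition B₀ T (f T))
    (D₀ : Finset (Finset (Fin (n + 1)))) (hD₀ : IsDecomposition B₀ S D₀) :
    D₀ = D₁.biUnion f := by
  classical
  obtain ⟨hmem1, hne1, hdisj1, hsup1⟩ := hD₁.1
  have habs1 : Absorbing B₁ S D₁ := decomposition_absorbing hB₁ hD₁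
  have habs0 : Absorbing B₀ S D₀ := decomposition_absorbing hB₀ hD₀
  have habsf : ∀ T ∈ D₁, Absorbing B₀ T (f T) :=
    fun T hT => decomposition_absorbing hB₀ (hf T hT)
  have hsubT : ∀ T ∈ D₁, ∀ m ∈ f T, m ⊆ T := by
    intro T hT m hm
    obtain ⟨⟨_, _, _, hsupf⟩, -⟩ := hf T hT
    exact hsupf ▸ Finset.le_sup (f := id) hm
  -- biUnion is a partition of S
  have hpart : IsBSPartition B₀ S (D₁.biUnion f) := by
    refine ⟨?_, ?_, ?_, ?_⟩
    · intro m hm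
      obtain ⟨T, hT, hmT⟩ := Finset.mem_biUnion.mp hm
      exact ((hf T hT).1).1 m hmT
    · intro m hm
      obtain ⟨T, hT, hmT⟩ := Finset.mem_biUnion.mp hm
      exact ((hf T hT).1).2.1 m hmT
    · intro m hm m' hm' hmm
      simp only [Finset.mem_coe] at hm hm'
      obtain ⟨T, hT, hmT⟩ := Finset.mem_biUnion.mp hm
      obtain ⟨T', hT', hmT'⟩ := Finset.mem_biUnion.mp hm'
      by_cases hTT : T = T'
      · subst hTT
        exact ((hf T hT).1).2.2.1 hmT hmT' hmm
      · exact Finset.disjoint_of_subset_left (hsubT T hT m hmT)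
          (Finset.disjoint_of_subset_right (hsubT T' hT' m' hmT') (hdisj1 hT hT' hTT))
    · apply le_antisymm
      · apply Finset.sup_le
        intro m hm
        obtain ⟨T, hT, hmT⟩ := Finset.mem_biUnion.mp hm
        exact le_trans (hsubT T hT m hmT) (hsup1 ▸ Finset.le_sup (f := id) hT)
      · rw [← hsup1]
        apply Finset.sup_le
        intro T hT
        obtain ⟨⟨_, _, _, hsupf⟩, -⟩ := hf T hT
        rw [show (id T : Finset (Fin (n+1))) = (f T).sup id from hsupf.symm]
        exact Finset.sup_le (fun m hm => Finset.le_sup (f := id) (Finset.mem_biUnion.mpr ⟨T, hT, hm⟩))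
    -- biUnion is absorbing
  have habsU : Absorbing B₀ S (D₁.biUnion f) := by
    intro m hm b hb hbS hbm
    obtain ⟨T, hT, hmT⟩ := Finset.mem_biUnion.mp hm
    have hbT : b ⊆ T := by
      apply habs1 T hT b (h01 hb) hbS
      obtain ⟨x, hx⟩ := hbm
      simp only [Finset.mem_inter] at hx
      exact ⟨x, Finset.mem_inter.mpr ⟨hx.1, hsubT T hT m hmT hx.2⟩⟩
    exact habsf T hT m hmT b hb hbT hbm
  exact Finset.Subset.antisymm
    (absorbing_subset hD₀.1 hpart habs0 habsU)
    (absorbing_subset hpart hD₀.1 habsU habs0)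
end

section
/- Let B be a connected building set on [n+1] such that the nestohedron P_B is flag (equivalently, using the criterion: every S ∈ B with |S| ≥ 2 can be written as S = S₁ ⊔ S₂ with S₁, S₂ ∈ B). Then there exists a connected building set B₀ ⊆ B such that P_{B₀} is combinatorially equivalent to the cube Iⁿ; concretely, there exists B₀ ⊆ B which is connected, contains all singletons, and such that every element of B₀ of size ≥ 2 splits as a disjoint union of exactly two elements of B₀, and |B₀| = 2n + 1. -/
/-- A building set on `[n+1]` (as a finite collection): nonempty subsets, all singletons,
closed under unions of intersecting members. -/
def IsBuildingSet {n : ℕ} (B : Finset (Finset (Fin (n + 1)))) : Prop :=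
  (∀ S ∈ B, S.Nonempty) ∧
  (∀ i : Fin (n + 1), ({i} : Finset (Fin (n + 1))) ∈ B) ∧
  (∀ S₁ ∈ B, ∀ S₂ ∈ B, (S₁ ∩ S₂).Nonempty → S₁ ∪ S₂ ∈ B)

/-- `B` is connected: `[n+1] ∈ B`. -/
def IsConnectedBS {n : ℕ} (B : Finset (Finset (Fin (n + 1)))) : Prop :=
  (Finset.univ : Finset (Fin (n + 1))) ∈ B

/-- `B` is flag: every member of size ≥ 2 is the disjoint union of two members
(the criterion for the nestohedron `P_B` to be a flag polytope). -/
def IsFlagBS {n : ℕ} (B : Finset (Finset (Fin (n + 1)))) : Prop :=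
  ∀ S ∈ B, 2 ≤ S.card →
    ∃ S₁ ∈ B, ∃ S₂ ∈ B, Disjoint S₁ S₂ ∧ S₁ ∪ S₂ = S

/-- Key construction: for each `S ∈ B` there is a laminar binary-tree subfamily `T ⊆ B`
rooted at `S` with leaves the singletons of `S` and `|T| = 2|S| - 1`. -/
lemma stmt15_aux {n : ℕ} (B : Finset (Finset (Fin (n + 1))))
    (hne : ∀ S ∈ B, S.Nonempty) (hflag : IsFlagBS B) :
    ∀ S : Finset (Fin (n + 1)), S ∈ B →
      ∃ T : Finset (Finset (Fin (n + 1))), T ⊆ B ∧ S ∈ T ∧ (∀ X ∈ T, X ⊆ S) ∧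
        (∀ X ∈ T, ∀ Y ∈ T, (X ∩ Y).Nonempty → X ⊆ Y ∨ Y ⊆ X) ∧
        (∀ i ∈ S, ({i} : Finset (Fin (n + 1))) ∈ T) ∧
        (∀ X ∈ T, 2 ≤ X.card → ∃ X₁ ∈ T, ∃ X₂ ∈ T, Disjoint X₁ X₂ ∧ X₁ ∪ X₂ = X) ∧
        T.card = 2 * S.card - 1 := by
  intro S
  induction S using Finset.strongInduction with
  | _ S ih =>
    intro hS
    by_cases hcard : 2 ≤ S.card
    · obtain ⟨S₁, hS₁B, S₂, hS₂B, hdisj, hunion⟩ := hflag S hS hcard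
      have hS₁ne := hne S₁ hS₁B
      have hS₂ne := hne S₂ hS₂B
      have hS₁ss : S₁ ⊂ S := by
        constructor
        · rw [← hunion]; exact Finset.subset_union_left
        · intro h
          obtain ⟨x, hx⟩ := hS₂ne
          have hxS : x ∈ S := by rw [← hunion]; exact Finset.mem_union_right _ hx
          exact (Finset.disjoint_right.mp hdisj hx) (h hxS)
      have hS₂ss : S₂ ⊂ S := by
        constructor
        · rw [← hunion]; exact Finset.subset_union_right
        · intro h
          obtain ⟨x, hx⟩ := hS₁ne
          have hxS : x ∈ S := by rw [← hunion]; exact Finset.mem_union_left _ hx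
          exact (Finset.disjoint_left.mp hdisj hx) (h hxS)
      obtain ⟨T₁, hT₁B, hS₁T₁, hsub₁, hlam₁, hsing₁, hsplit₁, hcard₁⟩ := ih S₁ hS₁ss hS₁B
      obtain ⟨T₂, hT₂B, hS₂T₂, hsub₂, hlam₂, hsing₂, hsplit₂, hcard₂⟩ := ih S₂ hS₂ss hS₂B
      refine ⟨insert S (T₁ ∪ T₂), ?_, Finset.mem_insert_self _ _, ?_, ?_, ?_, ?_, ?_⟩
      · intro X hX
        rcases Finset.mem_insert.mp hX with rfl | hX
        · exact hS
        · rcases Finset.mem_union.mp hX with h | h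
          exacts [hT₁B h, hT₂B h]
      · intro X hX
        rcases Finset.mem_insert.mp hX with rfl | hX
        · exact Finset.Subset.refl _
        · rcases Finset.mem_union.mp hX with h | h
          · exact (hsub₁ X h).trans hS₁ss.subset
          · exact (hsub₂ X h).trans hS₂ss.subset
      · intro X hX Y hY hXY
        have hsubS : ∀ Z, Z ∈ T₁ ∪ T₂ → Z ⊆ S := by
          intro Z hZ
          rcases Finset.mem_union.mp hZ with h | h
          · exact (hsub₁ Z h).trans hS₁ss.subset
          · exact (hsub₂ Z h).trans hS₂ss.subset
        rcases Finset.mem_insert.mp hX with rfl | hX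
        · refine Or.inr ?_
          rcases Finset.mem_insert.mp hY with rfl | hY
          · exact Finset.Subset.refl _
          · exact hsubS Y hY
        rcases Finset.mem_insert.mp hY with heq | hY
        · exact Or.inl (heq ▸ hsubS X hX)
        rcases Finset.mem_union.mp hX with h1 | h1 <;>
          rcases Finset.mem_union.mp hY with h2 | h2
        · exact hlam₁ X h1 Y h2 hXY
        · exfalso
          obtain ⟨x, hx⟩ := hXY
          rw [Finset.mem_inter] at hx
          exact Finset.disjoint_left.mp hdisj (hsub₁ X h1 hx.1) (hsub₂ Y h2 hx.2)
        · exfalso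
          obtain ⟨x, hx⟩ := hXY
          rw [Finset.mem_inter] at hx
          exact Finset.disjoint_left.mp hdisj (hsub₁ Y h2 hx.2) (hsub₂ X h1 hx.1)
        · exact hlam₂ X h1 Y h2 hXY
      · intro i hi
        rw [← hunion, Finset.mem_union] at hi
        rcases hi with h | h
        · exact Finset.mem_insert_of_mem (Finset.mem_union_left _ (hsing₁ i h))
        · exact Finset.mem_insert_of_mem (Finset.mem_union_right _ (hsing₂ i h))
      · intro X hX hX2
        rcases Finset.mem_insert.mp hX with rfl | hX
        · exact ⟨S₁, Finset.mem_insert_of_mem (Finset.mem_union_left _ hS₁T₁),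
            S₂, Finset.mem_insert_of_mem (Finset.mem_union_right _ hS₂T₂), hdisj, hunion⟩
        · rcases Finset.mem_union.mp hX with h | h
          · obtain ⟨X₁, hX₁, X₂, hX₂, hd, hu⟩ := hsplit₁ X h hX2
            exact ⟨X₁, Finset.mem_insert_of_mem (Finset.mem_union_left _ hX₁),
              X₂, Finset.mem_insert_of_mem (Finset.mem_union_left _ hX₂), hd, hu⟩
          · obtain ⟨X₁, hX₁, X₂, hX₂, hd, hu⟩ := hsplit₂ X h hX2
            exact ⟨X₁, Finset.mem_insert_of_mem (Finset.mem_union_right _ hX₁),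
              X₂, Finset.mem_insert_of_mem (Finset.mem_union_right _ hX₂), hd, hu⟩
      · have hTdisj : Disjoint T₁ T₂ := by
          rw [Finset.disjoint_left]
          intro X h1 h2
          obtain ⟨x, hx⟩ := hne X (hT₁B h1)
          exact Finset.disjoint_left.mp hdisj (hsub₁ X h1 hx) (hsub₂ X h2 hx)
        have hSnot : S ∉ T₁ ∪ T₂ := by
          intro h
          rcases Finset.mem_union.mp h with h | h
          · exact hS₁ss.not_subset (hsub₁ S h)
          · exact hS₂ss.not_subset (hsub₂ S h)
        rw [Finset.card_insert_of_notMem hSnot, Finset.card_union_of_disjoint hTdisj,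
          hcard₁, hcard₂]
        have hSc : S.card = S₁.card + S₂.card := by
          rw [← hunion, Finset.card_union_of_disjoint hdisj]
        have h1 : 1 ≤ S₁.card := Finset.card_pos.mpr hS₁ne
        have h2 : 1 ≤ S₂.card := Finset.card_pos.mpr hS₂ne
        omega
    · obtain ⟨i, hi⟩ := hne S hS
      have hS1 : S = {i} := by
        apply Finset.eq_singleton_iff_unique_mem.mpr
        refine ⟨hi, fun x hx => ?_⟩
        by_contra hne'
        have : 2 ≤ S.card := Finset.one_lt_card.mpr ⟨x, hx, i, hi, hne'⟩
        omega
      subst hS1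
      refine ⟨{({i} : Finset (Fin (n+1)))}, ?_, Finset.mem_singleton_self _, ?_, ?_, ?_, ?_, ?_⟩
      · simpa using hS
      · intro X hX; rw [Finset.mem_singleton] at hX; subst hX; exact Finset.Subset.refl _
      · intro X hX Y hY _
        rw [Finset.mem_singleton] at hX hY; subst hX; subst hY; exact Or.inl (Finset.Subset.refl _)
      · intro j hj
        rw [Finset.mem_singleton] at hj; subst hj; exact Finset.mem_singleton_self _
      · intro X hX hX2
        rw [Finset.mem_singleton] at hX; subst hX
        simp at hX2
      · simp

/-- If `B` is a connected building set on `[n+1]` whose nestohedron is flag, there is a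
connected building subset `B₀ ⊆ B`, containing all singletons, in which every non-singleton
element splits as a disjoint union of two elements of `B₀`, with `|B₀| = 2n + 1`
(so `P_{B₀}` is combinatorially a cube `Iⁿ`). -/
theorem stmt15 {n : ℕ} (B : Finset (Finset (Fin (n + 1))))
    (hB : IsBuildingSet B) (hconn : IsConnectedBS B) (hflag : IsFlagBS B) :
    ∃ B₀ ⊆ B, IsBuildingSet B₀ ∧ IsConnectedBS B₀ ∧
      (∀ i : Fin (n + 1), ({i} : Finset (Fin (n + 1))) ∈ B₀) ∧
      (∀ S ∈ B₀, 2 ≤ S.card → ∃ S₁ ∈ B₀, ∃ S₂ ∈ B₀, Disjoint S₁ S₂ ∧ S₁ ∪ S₂ = S) ∧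
      B₀.card = 2 * n + 1 := by
  obtain ⟨hne, hsing, hclose⟩ := hB
  obtain ⟨T, hTB, hunivT, hsub, hlam, hsingT, hsplit, hcard⟩ :=
    stmt15_aux B hne hflag Finset.univ hconn
  refine ⟨T, hTB, ⟨fun S hS => hne S (hTB hS), fun i => hsingT i (Finset.mem_univ i), ?_⟩,
    hunivT, fun i => hsingT i (Finset.mem_univ i), hsplit, ?_⟩
  · intro S₁ h1 S₂ h2 hint
    rcases hlam S₁ h1 S₂ h2 hint with h | h
    · rwa [Finset.union_eq_right.mpr h]
    · rwa [Finset.union_eq_left.mpr h]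
  · rw [hcard, Finset.card_univ, Fintype.card_fin]
    omega
end
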